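/- For every real 3×3 matrix A with positive determinant, |A|² ≥ 2|cof A| − 2·max{1, det A}. -/

import Mathlib

noncomputable def frob (A : Matrix (Fin 3) (Fin 3) ℝ) : ℝ :=
  Real.sqrt (∑ i, ∑ j, A i j ^ 2)

noncomputable def cof (A : Matrix (Fin 3) (Fin 3) ℝ) : Matrix (Fin 3) (Fin 3) ℝ :=
  (Matrix.adjugate A).transpose

open Matrix

private lemma key_aux (a b c m : ℝ) (ha : 0 ≤ a) (hb : 0 ≤ b) (hc : 0 ≤ c)
    (hm : 1 ≤ m) (habc : a * b * c ≤ m ^ 2) (h1 : c ≤ a) (h2 : c ≤ b) :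
    4 * (a*b + b*c + c*a) ≤ (a + b + c + 2*m) ^ 2 := by
  rcases le_or_gt c (2*m) with h | h
  · nlinarith [sq_nonneg (a - b), mul_nonneg (add_nonneg ha hb) (by linarith : (0:ℝ) ≤ 4*m - 2*c),
      mul_nonneg (by linarith : (0:ℝ) ≤ m) hc, sq_nonneg m]
  · exfalso
    nlinarith [mul_pos (by linarith : (0:ℝ) < a) (by linarith : (0:ℝ) < b)]

private lemma key_scalar (a b c m : ℝ) (ha : 0 ≤ a) (hb : 0 ≤ b) (hc : 0 ≤ c)
    (hm : 1 ≤ m) (habc : a * b * c ≤ m ^ 2) :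
    4 * (a*b + b*c + c*a) ≤ (a + b + c + 2*m) ^ 2 := by
  rcases le_total a b with h1 | h1 <;> rcases le_total b c with h2 | h2 <;>
    rcases le_total a c with h3 | h3
  · nlinarith [key_aux b c a m (by linarith) (by linarith) (by linarith) hm (by nlinarith) (by linarith) (by linarith)]
  · nlinarith [key_aux b c a m (by linarith) (by linarith) (by linarith) hm (by nlinarith) (by linarith) (by linarith)]
  · nlinarith [key_aux b c a m (by linarith) (by linarith) (by linarith) hm (by nlinarith) (by linarith) (by linarith)]
  · nlinarith [key_aux a b c m (by linarith) (by linarith) (by linarith) hm (by nlinarith) (by linarith) (by linarith)]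
  · nlinarith [key_aux a c b m (by linarith) (by linarith) (by linarith) hm (by nlinarith) (by linarith) (by linarith)]
  · nlinarith [key_aux a c b m (by linarith) (by linarith) (by linarith) hm (by nlinarith) (by linarith) (by linarith)]
  · nlinarith [key_aux a b c m (by linarith) (by linarith) (by linarith) hm (by nlinarith) (by linarith) (by linarith)]
  · nlinarith [key_aux a b c m (by linarith) (by linarith) (by linarith) hm (by nlinarith) (by linarith) (by linarith)]

private lemma trace_eq_sum_eig {M : Matrix (Fin 3) (Fin 3) ℝ} (hM : M.IsHermitian) :
    M.trace = ∑ i, hM.eigenvalues i := by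
  conv_lhs => rw [hM.spectral_theorem, Unitary.conjStarAlgAut_apply]
  rw [Matrix.trace_mul_cycle,
    mem_unitaryGroup_iff'.mp (hM.eigenvectorUnitary).2, one_mul, Matrix.trace_diagonal]
  simp

private lemma trace_sq_eq_sum_eig_sq {M : Matrix (Fin 3) (Fin 3) ℝ} (hM : M.IsHermitian) :
    (M * M).trace = ∑ i, hM.eigenvalues i ^ 2 := by
  have hU := mem_unitaryGroup_iff'.mp (hM.eigenvectorUnitary).2
  set U : Matrix (Fin 3) (Fin 3) ℝ := (hM.eigenvectorUnitary : Matrix (Fin 3) (Fin 3) ℝ) with hUdef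
  set D : Matrix (Fin 3) (Fin 3) ℝ := diagonal (RCLike.ofReal ∘ hM.eigenvalues)
  have h1 : M * M = U * (D * D) * star U := by
    conv_lhs => rw [hM.spectral_theorem, Unitary.conjStarAlgAut_apply]
    calc (U * D * star U) * (U * D * star U)
        = U * D * ((star U * U) * (D * star U)) := by simp only [Matrix.mul_assoc]
      _ = U * (D * D) * star U := by rw [hU, one_mul]; simp only [Matrix.mul_assoc]
  rw [h1, Matrix.trace_mul_cycle, ← Matrix.mul_assoc, hU, one_mul]
  simp [D, diagonal_mul_diagonal, trace_diagonal, pow_two]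

private lemma trace_M_eq (A : Matrix (Fin 3) (Fin 3) ℝ) :
    (Aᴴ * A).trace = ∑ i, ∑ j, A i j ^ 2 := by
  simp only [Matrix.trace, Matrix.diag, Matrix.mul_apply, conjTranspose_apply,
    Fin.sum_univ_three, star_trivial]
  ring

private lemma cof_identity (A : Matrix (Fin 3) (Fin 3) ℝ) :
    ∑ i, ∑ j, cof A i j ^ 2 = (((Aᴴ * A).trace) ^ 2 - ((Aᴴ * A) * (Aᴴ * A)).trace) / 2 := by
  simp only [cof, Matrix.adjugate_fin_three, Matrix.trace, Matrix.diag, Matrix.mul_apply,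
    conjTranspose_apply, transpose_apply, Fin.sum_univ_three, Matrix.cons_val', Matrix.cons_val_zero,
    Matrix.cons_val_one, Matrix.head_cons, Matrix.empty_val', Matrix.cons_val_fin_one,
    Matrix.head_fin_const, Matrix.cons_val_two, Matrix.tail_cons, Matrix.of_apply, star_trivial]
  ring

private lemma det_M_eq (A : Matrix (Fin 3) (Fin 3) ℝ) : (Aᴴ * A).det = A.det ^ 2 := by
  rw [Matrix.det_mul, Matrix.det_conjTranspose]
  simp [pow_two]

private lemma eig_package (A : Matrix (Fin 3) (Fin 3) ℝ) :
    ∃ a b c : ℝ, 0 ≤ a ∧ 0 ≤ b ∧ 0 ≤ c ∧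
      (∑ i, ∑ j, A i j ^ 2) = a + b + c ∧ a * b * c = A.det ^ 2 ∧
      (∑ i, ∑ j, cof A i j ^ 2) = a*b + b*c + c*a := by
  have hPSD := Matrix.posSemidef_conjTranspose_mul_self A
  have hM : (Aᴴ * A).IsHermitian := hPSD.isHermitian
  refine ⟨hM.eigenvalues 0, hM.eigenvalues 1, hM.eigenvalues 2,
    hPSD.eigenvalues_nonneg 0, hPSD.eigenvalues_nonneg 1, hPSD.eigenvalues_nonneg 2, ?_, ?_, ?_⟩
  · rw [← trace_M_eq A, trace_eq_sum_eig hM, Fin.sum_univ_three]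
  · have h := hM.det_eq_prod_eigenvalues
    rw [det_M_eq A, Fin.prod_univ_three] at h
    exact_mod_cast h.symm
  · rw [cof_identity A, trace_eq_sum_eig hM, trace_sq_eq_sum_eig_sq hM,
      Fin.sum_univ_three, Fin.sum_univ_three]
    ring

theorem frob_sq_ge_two_frob_cof_sub (A : Matrix (Fin 3) (Fin 3) ℝ) (hA : 0 < A.det) :
    frob A ^ 2 ≥ 2 * frob (cof A) - 2 * max 1 A.det := by
  obtain ⟨a, b, c, ha, hb, hc, htr, hdet, hpe⟩ := eig_package A
  have hm1 : (1:ℝ) ≤ max 1 A.det := le_max_left _ _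
  have hmd : A.det ≤ max 1 A.det := le_max_right _ _
  have hs0 : (0:ℝ) ≤ ∑ i, ∑ j, A i j ^ 2 :=
    Finset.sum_nonneg fun i _ => Finset.sum_nonneg fun j _ => sq_nonneg _
  have hp0 : (0:ℝ) ≤ ∑ i, ∑ j, cof A i j ^ 2 :=
    Finset.sum_nonneg fun i _ => Finset.sum_nonneg fun j _ => sq_nonneg _
  have habc : a * b * c ≤ (max 1 A.det) ^ 2 := by
    rw [hdet]
    nlinarith [le_of_lt hA]
  have hkey := key_scalar a b c (max 1 A.det) ha hb hc hm1 habc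
  have hfa : frob A ^ 2 = ∑ i, ∑ j, A i j ^ 2 := Real.sq_sqrt hs0
  have hfc : frob (cof A) ≤ ((∑ i, ∑ j, A i j ^ 2) + 2 * max 1 A.det) / 2 := by
    have h3 : (0:ℝ) ≤ ((∑ i, ∑ j, A i j ^ 2) + 2 * max 1 A.det) / 2 := by linarith
    have h1 : (∑ i, ∑ j, cof A i j ^ 2) ≤ (((∑ i, ∑ j, A i j ^ 2) + 2 * max 1 A.det) / 2) ^ 2 := by
      rw [hpe, htr]; nlinarith
    calc frob (cof A) = Real.sqrt (∑ i, ∑ j, cof A i j ^ 2) := rfl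
      _ ≤ Real.sqrt ((((∑ i, ∑ j, A i j ^ 2) + 2 * max 1 A.det) / 2) ^ 2) := Real.sqrt_le_sqrt h1
      _ = ((∑ i, ∑ j, A i j ^ 2) + 2 * max 1 A.det) / 2 := Real.sqrt_sq h3
  rw [hfa]
  linarith
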